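/- Fix coprime positive integers d₁, d₂ and consider the commutative graded ℚ-algebra R generated by elements α of degree 2/d₁ and β of degree 2/d₂ subject to the relations α^{d₁} = β^{d₂} and α^{d₁+1} = β^{d₂+1} = 0. Then R has a ℚ-basis {1, α, α², ..., α^{d₁-1}, β, β², ..., β^{d₂-1}, α^{d₁}}, of dimension d₁ + d₂. -/

import Mathlib

open MvPolynomial


/-- The ideal (x^{d₁} - y^{d₂}, x·y, x^{d₁+1}) defining the orbifold cohomology ring of
the weighted projective line CP(d₁,d₂). -/
noncomputable def wpIdeal (d₁ d₂ : ℕ) : Ideal (MvPolynomial (Fin 2) ℚ) :=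
  Ideal.span {MvPolynomial.X 0 ^ d₁ - MvPolynomial.X 1 ^ d₂,
    MvPolynomial.X 0 * MvPolynomial.X 1, MvPolynomial.X 0 ^ (d₁ + 1)}


noncomputable def wpFun (d₁ d₂ : ℕ) : Fin d₁ ⊕ Fin d₂ → MvPolynomial (Fin 2) ℚ →ₗ[ℚ] ℚ
  | Sum.inl i => lcoeff ℚ (Finsupp.single 0 (i : ℕ))
  | Sum.inr j => lcoeff ℚ (Finsupp.single 1 ((j : ℕ) + 1)) +
      (if (j : ℕ) = d₂ - 1 then lcoeff ℚ (Finsupp.single 0 d₁) else 0)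
noncomputable def wpL (d₁ d₂ : ℕ) : MvPolynomial (Fin 2) ℚ →ₗ[ℚ] (Fin d₁ ⊕ Fin d₂ → ℚ) :=
  LinearMap.pi (wpFun d₁ d₂)
lemma fin2_finsupp_eq (m n : Fin 2 →₀ ℕ) : m = n ↔ m 0 = n 0 ∧ m 1 = n 1 := by
  constructor
  · rintro rfl; exact ⟨rfl, rfl⟩
  · rintro ⟨h0, h1⟩; ext i; fin_cases i <;> assumption

lemma wpL_monomial_inl (d₁ d₂ : ℕ) (m : Fin 2 →₀ ℕ) (c : ℚ) (i : Fin d₁) :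
    wpL d₁ d₂ (monomial m c) (Sum.inl i) = if m 0 = (i : ℕ) ∧ m 1 = 0 then c else 0 := by
  have hs : ∀ (i : Fin 2) (a : ℕ), m = Finsupp.single i a ↔
      m 0 = Finsupp.single i a 0 ∧ m 1 = Finsupp.single i a 1 := fun i a => fin2_finsupp_eq _ _
  simp only [wpL, LinearMap.pi_apply, wpFun, lcoeff_apply, coeff_monomial]
  simp only [hs 0 (i : ℕ)]
  simp [Finsupp.single_apply]

lemma wpL_monomial_inr (d₁ d₂ : ℕ) (m : Fin 2 →₀ ℕ) (c : ℚ) (j : Fin d₂) :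
    wpL d₁ d₂ (monomial m c) (Sum.inr j) = (if m 0 = 0 ∧ m 1 = (j : ℕ) + 1 then c else 0) +
          (if (j : ℕ) = d₂ - 1 ∧ m 0 = d₁ ∧ m 1 = 0 then c else 0) := by
  have hs : ∀ (i : Fin 2) (a : ℕ), m = Finsupp.single i a ↔
      m 0 = Finsupp.single i a 0 ∧ m 1 = Finsupp.single i a 1 := fun i a => fin2_finsupp_eq _ _
  by_cases hj : (j : ℕ) = d₂ - 1
  · simp only [wpL, LinearMap.pi_apply, wpFun, if_pos hj, LinearMap.add_apply,
      lcoeff_apply, coeff_monomial]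
    simp only [hs 1 ((j:ℕ)+1), hs 0 d₁]
    simp [Finsupp.single_apply, hj]
  · simp only [wpL, LinearMap.pi_apply, wpFun, if_neg hj, add_zero, LinearMap.add_apply,
      LinearMap.zero_apply, lcoeff_apply, coeff_monomial]
    simp only [hs 1 ((j:ℕ)+1)]
    simp [Finsupp.single_apply, hj]

lemma wpL_mul_gen (d₁ d₂ : ℕ) (h₁ : 0 < d₁) (h₂ : 0 < d₂) (q : MvPolynomial (Fin 2) ℚ) :
    wpL d₁ d₂ (q * (X 0 ^ d₁ - X 1 ^ d₂)) = 0 ∧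
    wpL d₁ d₂ (q * (X 0 * X 1)) = 0 ∧
    wpL d₁ d₂ (q * X 0 ^ (d₁ + 1)) = 0 := by
  induction q using MvPolynomial.induction_on' with
  | add p q hp hq =>
      refine ⟨?_, ?_, ?_⟩ <;>
        simp only [add_mul, map_add, hp.1, hp.2.1, hp.2.2, hq.1, hq.2.1, hq.2.2, add_zero]
  | monomial m a =>
      have e1 : monomial m a * (X (R := ℚ) (0 : Fin 2) ^ d₁ - X 1 ^ d₂) =
          monomial (m + Finsupp.single 0 d₁) a - monomial (m + Finsupp.single 1 d₂) a := by
        rw [mul_sub, X_pow_eq_monomial, X_pow_eq_monomial, monomial_mul, monomial_mul]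
        ring_nf
      have e2 : monomial m a * (X (R := ℚ) (0 : Fin 2) * X 1) =
          monomial (m + (Finsupp.single 0 1 + Finsupp.single 1 1)) a := by
        rw [show X (R := ℚ) (0 : Fin 2) * X 1 =
            monomial (Finsupp.single 0 1 + Finsupp.single 1 1) 1
          from by rw [X, X, monomial_mul, mul_one], monomial_mul, mul_one]
      have e3 : monomial m a * (X (R := ℚ) (0 : Fin 2) ^ (d₁+1)) =
          monomial (m + Finsupp.single 0 (d₁+1)) a := by
        rw [X_pow_eq_monomial, monomial_mul, mul_one]
      have ha : ∀ (n : Fin 2 →₀ ℕ) (i : Fin 2) (e : ℕ) (k : Fin 2),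
          (n + Finsupp.single i e) k = n k + Finsupp.single i e k := fun _ _ _ _ => rfl
      refine ⟨?_, ?_, ?_⟩
      · rw [e1, map_sub]
        clear e1 e2 e3 ha
        funext k
        cases k with
        | inl i =>
            have := i.isLt
            simp only [Pi.sub_apply, Pi.zero_apply, wpL_monomial_inl, Finsupp.add_apply,
              Finsupp.single_eq_same, Finsupp.single_eq_of_ne (show (0:Fin 2) ≠ 1 by decide),
              Finsupp.single_eq_of_ne (show (1:Fin 2) ≠ 0 by decide), add_zero]
            split_ifs <;> first | omega | ring1 | tauto
        | inr j =>
            have := j.isLt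
            simp only [Pi.sub_apply, Pi.zero_apply, wpL_monomial_inr, Finsupp.add_apply,
              Finsupp.single_eq_same, Finsupp.single_eq_of_ne (show (0:Fin 2) ≠ 1 by decide),
              Finsupp.single_eq_of_ne (show (1:Fin 2) ≠ 0 by decide), add_zero]
            split_ifs <;> first | omega | ring1 | tauto
      · rw [e2]
        clear e1 e2 e3 ha
        funext k
        cases k with
        | inl i =>
            simp only [Pi.zero_apply, wpL_monomial_inl, Finsupp.add_apply,
              Finsupp.single_eq_same, Finsupp.single_eq_of_ne (show (0:Fin 2) ≠ 1 by decide),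
              Finsupp.single_eq_of_ne (show (1:Fin 2) ≠ 0 by decide), add_zero, zero_add]
            split_ifs <;> first | omega | ring1 | tauto
        | inr j =>
            have := j.isLt
            simp only [Pi.zero_apply, wpL_monomial_inr, Finsupp.add_apply,
              Finsupp.single_eq_same, Finsupp.single_eq_of_ne (show (0:Fin 2) ≠ 1 by decide),
              Finsupp.single_eq_of_ne (show (1:Fin 2) ≠ 0 by decide), add_zero, zero_add]
            split_ifs <;> first | omega | ring1 | tauto
      · rw [e3]
        clear e1 e2 e3 ha
        funext k
        cases k with
        | inl i =>
            have := i.isLt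
            simp only [Pi.zero_apply, wpL_monomial_inl, Finsupp.add_apply,
              Finsupp.single_eq_same, Finsupp.single_eq_of_ne (show (0:Fin 2) ≠ 1 by decide),
              Finsupp.single_eq_of_ne (show (1:Fin 2) ≠ 0 by decide), add_zero]
            split_ifs <;> first | omega | ring1 | tauto
        | inr j =>
            have := j.isLt
            simp only [Pi.zero_apply, wpL_monomial_inr, Finsupp.add_apply,
              Finsupp.single_eq_same, Finsupp.single_eq_of_ne (show (0:Fin 2) ≠ 1 by decide),
              Finsupp.single_eq_of_ne (show (1:Fin 2) ≠ 0 by decide), add_zero]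
            split_ifs <;> first | omega | ring1 | tauto

lemma wpIdeal_vanish (d₁ d₂ : ℕ) (h₁ : 0 < d₁) (h₂ : 0 < d₂) :
    ∀ p ∈ wpIdeal d₁ d₂, wpL d₁ d₂ p = 0 := by
  intro p hp
  rw [wpIdeal, Ideal.mem_span_insert] at hp
  obtain ⟨a, z, hz, rfl⟩ := hp
  rw [Ideal.mem_span_insert] at hz
  obtain ⟨b, w, hw, rfl⟩ := hz
  rw [Ideal.mem_span_singleton'] at hw
  obtain ⟨c, rfl⟩ := hw
  simp only [map_add, (wpL_mul_gen d₁ d₂ h₁ h₂ a).1, (wpL_mul_gen d₁ d₂ h₁ h₂ b).2.1,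
    (wpL_mul_gen d₁ d₂ h₁ h₂ c).2.2, add_zero]

lemma wp_gen1 (d₁ d₂ : ℕ) : (X (R:=ℚ) (0:Fin 2) ^ d₁ - X 1 ^ d₂) ∈ wpIdeal d₁ d₂ :=
  Ideal.subset_span (by simp)

lemma wp_gen2 (d₁ d₂ : ℕ) : (X (R:=ℚ) (0:Fin 2) * X 1) ∈ wpIdeal d₁ d₂ :=
  Ideal.subset_span (by simp)

lemma wp_gen3 (d₁ d₂ : ℕ) : (X (R:=ℚ) (0:Fin 2) ^ (d₁+1)) ∈ wpIdeal d₁ d₂ :=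
  Ideal.subset_span (by simp)

lemma wp_xpow_mem (d₁ d₂ a : ℕ) (ha : d₁ + 1 ≤ a) : (X (R:=ℚ) (0:Fin 2) ^ a) ∈ wpIdeal d₁ d₂ := by
  have h : X (R:=ℚ) (0:Fin 2) ^ a = X 0 ^ (a - (d₁+1)) * X 0 ^ (d₁+1) := by
    rw [← pow_add]; congr 1; omega
  rw [h]; exact Ideal.mul_mem_left _ _ (wp_gen3 d₁ d₂)

lemma wp_ypow_mem (d₁ d₂ b : ℕ) (h₁ : 0 < d₁) (hb : d₂ + 1 ≤ b) :
    (X (R:=ℚ) (1:Fin 2) ^ b) ∈ wpIdeal d₁ d₂ := by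
  obtain ⟨n, rfl⟩ : ∃ n, d₁ = n + 1 := ⟨d₁ - 1, by omega⟩
  have key : X (R:=ℚ) (1:Fin 2) ^ (d₂+1) =
      -(X 1) * (X 0 ^ (n+1) - X 1 ^ d₂) + X 0 ^ n * (X 0 * X 1) := by ring
  have mem : X (R:=ℚ) (1:Fin 2) ^ (d₂+1) ∈ wpIdeal (n+1) d₂ := by
    rw [key]
    exact Ideal.add_mem _ (Ideal.mul_mem_left _ _ (wp_gen1 _ _))
      (Ideal.mul_mem_left _ _ (wp_gen2 _ _))
  have h : X (R:=ℚ) (1:Fin 2) ^ b = X 1 ^ (b - (d₂+1)) * X 1 ^ (d₂+1) := by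
    rw [← pow_add]; congr 1; omega
  rw [h]; exact Ideal.mul_mem_left _ _ mem

lemma wp_mixed_mem (d₁ d₂ a b : ℕ) (ha : 0 < a) (hb : 0 < b) :
    (X (R:=ℚ) (0:Fin 2) ^ a * X 1 ^ b) ∈ wpIdeal d₁ d₂ := by
  obtain ⟨a', rfl⟩ : ∃ a', a = a' + 1 := ⟨a - 1, by omega⟩
  obtain ⟨b', rfl⟩ : ∃ b', b = b' + 1 := ⟨b - 1, by omega⟩
  have h : X (R:=ℚ) (0:Fin 2) ^ (a'+1) * X 1 ^ (b'+1) =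
      X 0 ^ a' * X 1 ^ b' * (X 0 * X 1) := by ring
  rw [h]; exact Ideal.mul_mem_left _ _ (wp_gen2 _ _)

lemma wp_rel (d₁ d₂ : ℕ) :
    Ideal.Quotient.mk (wpIdeal d₁ d₂) (X 0 ^ d₁) = Ideal.Quotient.mk (wpIdeal d₁ d₂) (X 1 ^ d₂) :=
  Ideal.Quotient.eq.mpr (wp_gen1 d₁ d₂)

lemma monomial_eq_pow_mul_pow (m : Fin 2 →₀ ℕ) :
    (monomial m (1:ℚ)) = X 0 ^ (m 0) * X 1 ^ (m 1) := by
  have hm : Finsupp.single (0:Fin 2) (m 0) + Finsupp.single 1 (m 1) = m := by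
    ext k
    fin_cases k <;> simp [Finsupp.single_apply]
  rw [X_pow_eq_monomial, X_pow_eq_monomial, monomial_mul, mul_one, hm]

/-- spanning -/
lemma wp_span (d₁ d₂ : ℕ) (h₁ : 0 < d₁) (h₂ : 0 < d₂) :
    ⊤ ≤ Submodule.span ℚ (Set.range (fun k : Fin d₁ ⊕ Fin d₂ =>
      match k with
      | Sum.inl i => Ideal.Quotient.mk (wpIdeal d₁ d₂) (X 0) ^ (i : ℕ)
      | Sum.inr j => Ideal.Quotient.mk (wpIdeal d₁ d₂) (X 1) ^ ((j : ℕ) + 1))) := by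
  set v := fun k : Fin d₁ ⊕ Fin d₂ =>
      match k with
      | Sum.inl i => Ideal.Quotient.mk (wpIdeal d₁ d₂) (X 0) ^ (i : ℕ)
      | Sum.inr j => Ideal.Quotient.mk (wpIdeal d₁ d₂) (X 1) ^ ((j : ℕ) + 1) with hv
  intro x _
  obtain ⟨p, rfl⟩ := Ideal.Quotient.mk_surjective x
  induction p using MvPolynomial.induction_on' with
  | add p q hp hq => rw [map_add]; exact Submodule.add_mem _ (hp trivial) (hq trivial)
  | monomial m a =>
      have hsm : (monomial m a) = a • (monomial m (1:ℚ)) := by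
        rw [smul_monomial, smul_eq_mul, mul_one]
      rw [hsm, show Ideal.Quotient.mk (wpIdeal d₁ d₂) (a • monomial m 1) = a • Ideal.Quotient.mk (wpIdeal d₁ d₂) (monomial m 1) from rfl]
      refine Submodule.smul_mem _ _ ?_
      rw [monomial_eq_pow_mul_pow, map_mul, map_pow, map_pow]
      rcases Nat.eq_zero_or_pos (m 0) with hm0 | hm0
      · rcases Nat.lt_or_ge (m 1) (d₂ + 1) with hm1 | hm1
        · rcases Nat.eq_zero_or_pos (m 1) with hm1' | hm1'
          · -- constant 1 : equals v (inl 0)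
            rw [hm0, hm1', pow_zero, pow_zero, mul_one]
            have : (1 : MvPolynomial (Fin 2) ℚ ⧸ wpIdeal d₁ d₂) = v (Sum.inl ⟨0, h₁⟩) := by
              simp [hv]
            rw [this]
            exact Submodule.subset_span ⟨Sum.inl ⟨0, h₁⟩, rfl⟩
          · -- y^b, 1 ≤ b ≤ d₂ : v (inr ⟨m 1 - 1⟩)
            rw [hm0, pow_zero, one_mul]
            have : (Ideal.Quotient.mk (wpIdeal d₁ d₂) (X 1)) ^ (m 1) =
                v (Sum.inr ⟨m 1 - 1, by omega⟩) := by
              simp only [hv]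
              congr 1
              omega
            rw [this]
            exact Submodule.subset_span ⟨Sum.inr ⟨m 1 - 1, by omega⟩, rfl⟩
        · -- y^b, b > d₂ : zero
          rw [hm0, pow_zero, one_mul, ← map_pow,
            Ideal.Quotient.eq_zero_iff_mem.mpr (wp_ypow_mem d₁ d₂ (m 1) h₁ hm1)]
          exact Submodule.zero_mem _
      · rcases Nat.eq_zero_or_pos (m 1) with hm1 | hm1
        · rcases Nat.lt_or_ge (m 0) d₁ with hm0' | hm0'
          · rw [hm1, pow_zero, mul_one]
            have : (Ideal.Quotient.mk (wpIdeal d₁ d₂) (X 0)) ^ (m 0) =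
                v (Sum.inl ⟨m 0, hm0'⟩) := by simp [hv]
            rw [this]
            exact Submodule.subset_span ⟨Sum.inl ⟨m 0, hm0'⟩, rfl⟩
          · rcases Nat.eq_or_lt_of_le hm0' with hm0'' | hm0''
            · -- x^{d₁} = y^{d₂} = v (inr (d₂-1))
              rw [hm1, pow_zero, mul_one, ← map_pow, ← hm0'', wp_rel d₁ d₂, map_pow]
              have : (Ideal.Quotient.mk (wpIdeal d₁ d₂) (X 1)) ^ d₂ =
                  v (Sum.inr ⟨d₂ - 1, by omega⟩) := by
                simp only [hv]
                congr 1
                omega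
              rw [this]
              exact Submodule.subset_span ⟨Sum.inr ⟨d₂ - 1, by omega⟩, rfl⟩
            · rw [hm1, pow_zero, mul_one, ← map_pow,
                Ideal.Quotient.eq_zero_iff_mem.mpr (wp_xpow_mem d₁ d₂ (m 0) (by omega))]
              exact Submodule.zero_mem _
        · rw [← map_pow, ← map_pow, ← map_mul,
            Ideal.Quotient.eq_zero_iff_mem.mpr (wp_mixed_mem d₁ d₂ (m 0) (m 1) hm0 hm1)]
          exact Submodule.zero_mem _


noncomputable def wpP (d₁ d₂ : ℕ) : Fin d₁ ⊕ Fin d₂ → MvPolynomial (Fin 2) ℚ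
  | Sum.inl i => X 0 ^ (i : ℕ)
  | Sum.inr j => X 1 ^ ((j : ℕ) + 1)

lemma wpL_wpP (d₁ d₂ : ℕ) (h₁ : 0 < d₁) (h₂ : 0 < d₂) (k k' : Fin d₁ ⊕ Fin d₂) :
    wpL d₁ d₂ (wpP d₁ d₂ k) k' = if k = k' then 1 else 0 := by
  have ea : ∀ a : ℕ, (Finsupp.single (0:Fin 2) a : Fin 2 →₀ ℕ) 0 = a :=
    fun a => Finsupp.single_eq_same
  have eb : ∀ a : ℕ, (Finsupp.single (0:Fin 2) a : Fin 2 →₀ ℕ) 1 = 0 :=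
    fun a => Finsupp.single_eq_of_ne (by decide)
  have ec : ∀ a : ℕ, (Finsupp.single (1:Fin 2) a : Fin 2 →₀ ℕ) 0 = 0 :=
    fun a => Finsupp.single_eq_of_ne (by decide)
  have ed : ∀ a : ℕ, (Finsupp.single (1:Fin 2) a : Fin 2 →₀ ℕ) 1 = a :=
    fun a => Finsupp.single_eq_same
  cases k with
  | inl i =>
    have hi := i.isLt
    rw [show wpP d₁ d₂ (Sum.inl i) = monomial (Finsupp.single 0 (i:ℕ)) 1 from X_pow_eq_monomial]
    cases k' with
    | inl i' =>
      rw [wpL_monomial_inl, ea, eb]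
      by_cases h : (i : ℕ) = (i' : ℕ)
      · rw [if_pos ⟨h, rfl⟩, if_pos (by simp [Fin.ext_iff, h])]
      · rw [if_neg (by omega), if_neg (by simp [Fin.ext_iff, h])]
    | inr j' =>
      have hj' := j'.isLt
      rw [wpL_monomial_inr, ea, eb, if_neg (by omega), if_neg (by omega)]
      simp
  | inr j =>
    have hj := j.isLt
    rw [show wpP d₁ d₂ (Sum.inr j) = monomial (Finsupp.single 1 ((j:ℕ)+1)) 1
      from X_pow_eq_monomial]
    cases k' with
    | inl i' =>
      rw [wpL_monomial_inl, ec, ed, if_neg (by omega)]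
      simp
    | inr j' =>
      have hj' := j'.isLt
      rw [wpL_monomial_inr, ec, ed]
      by_cases h : (j : ℕ) = (j' : ℕ)
      · rw [if_pos ⟨rfl, by omega⟩, if_neg (by omega), if_pos (by simp [Fin.ext_iff, h])]
        simp
      · rw [if_neg (by omega), if_neg (by omega), if_neg (by simp [Fin.ext_iff, h])]
        simp

lemma wp_li (d₁ d₂ : ℕ) (h₁ : 0 < d₁) (h₂ : 0 < d₂) :
    LinearIndependent ℚ (fun k : Fin d₁ ⊕ Fin d₂ =>
      Ideal.Quotient.mk (wpIdeal d₁ d₂) (wpP d₁ d₂ k)) := by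
  rw [Fintype.linearIndependent_iff]
  intro g hg k
  have hmk : Ideal.Quotient.mk (wpIdeal d₁ d₂) (∑ k, g k • wpP d₁ d₂ k) = 0 := by
    rw [map_sum]
    rw [show (∑ k, Ideal.Quotient.mk (wpIdeal d₁ d₂) (g k • wpP d₁ d₂ k)) =
        ∑ k, g k • Ideal.Quotient.mk (wpIdeal d₁ d₂) (wpP d₁ d₂ k) from rfl]
    exact hg
  have hmem : (∑ k, g k • wpP d₁ d₂ k) ∈ wpIdeal d₁ d₂ :=
    Ideal.Quotient.eq_zero_iff_mem.mp hmk
  have hL : wpL d₁ d₂ (∑ k, g k • wpP d₁ d₂ k) = 0 := wpIdeal_vanish d₁ d₂ h₁ h₂ _ hmem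
  have hval : wpL d₁ d₂ (∑ k', g k' • wpP d₁ d₂ k') k = g k := by
    rw [map_sum]
    rw [show (∑ k', wpL d₁ d₂ (g k' • wpP d₁ d₂ k')) = ∑ k', g k' • wpL d₁ d₂ (wpP d₁ d₂ k')
      from by simp [map_smul]]
    rw [Finset.sum_apply]
    simp only [Pi.smul_apply, wpL_wpP d₁ d₂ h₁ h₂, smul_eq_mul, mul_ite, mul_one, mul_zero]
    simp
  rw [hL] at hval
  simpa using hval.symm


/-- For coprime d₁, d₂ ≥ 1, the ring
R = ℚ[α,β]/(α^{d₁} - β^{d₂}, αβ, α^{d₁+1}) has ℚ-basis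
{1, α, ..., α^{d₁-1}, β, ..., β^{d₂-1}, α^{d₁} = β^{d₂}}, of dimension d₁ + d₂. -/
theorem wp_orbifold_cohomology_basis (d₁ d₂ : ℕ) (h₁ : 0 < d₁) (h₂ : 0 < d₂)
    (hco : Nat.Coprime d₁ d₂) :
    (∃ b : Module.Basis (Fin d₁ ⊕ Fin d₂) ℚ (MvPolynomial (Fin 2) ℚ ⧸ wpIdeal d₁ d₂),
      (∀ i : Fin d₁, b (Sum.inl i) =
        Ideal.Quotient.mk (wpIdeal d₁ d₂) (MvPolynomial.X 0) ^ (i : ℕ)) ∧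
      (∀ j : Fin d₂, b (Sum.inr j) =
        Ideal.Quotient.mk (wpIdeal d₁ d₂) (MvPolynomial.X 1) ^ ((j : ℕ) + 1))) ∧
    Module.finrank ℚ (MvPolynomial (Fin 2) ℚ ⧸ wpIdeal d₁ d₂) = d₁ + d₂ := by
  have hspan := wp_span d₁ d₂ h₁ h₂
  have hmkP : (fun k : Fin d₁ ⊕ Fin d₂ => Ideal.Quotient.mk (wpIdeal d₁ d₂) (wpP d₁ d₂ k)) =
      (fun k : Fin d₁ ⊕ Fin d₂ =>
        match k with
        | Sum.inl i => Ideal.Quotient.mk (wpIdeal d₁ d₂) (X 0) ^ (i : ℕ)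
        | Sum.inr j => Ideal.Quotient.mk (wpIdeal d₁ d₂) (X 1) ^ ((j : ℕ) + 1)) := by
    funext k
    cases k <;> simp [wpP, map_pow]
  have hli := wp_li d₁ d₂ h₁ h₂
  rw [hmkP] at hli
  let b := Module.Basis.mk hli hspan
  refine ⟨⟨b, fun i => ?_, fun j => ?_⟩, ?_⟩
  · rw [show b (Sum.inl i) = _ from Module.Basis.mk_apply hli hspan (Sum.inl i)]
  · rw [show b (Sum.inr j) = _ from Module.Basis.mk_apply hli hspan (Sum.inr j)]
  · rw [Module.finrank_eq_card_basis b, Fintype.card_sum, Fintype.card_fin, Fintype.card_fin]
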